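/- Let A be a Poincaré duality algebra of dimension n over a field 𝕜 which is connected, i.e. A^0 = 𝕜·1_A, with homogeneous basis {a_i} and dual basis {a_i^∨}. Let vol_A ∈ A^n be an element with ε(vol_A) = 1, and let χ(A) = Σ_p (−1)^p dim_𝕜 A^p be the Euler characteristic of A. Then the image of the diagonal element under the multiplication map μ_A : A ⊗ A → A satisfies μ_A(Δ_A) = Σ_i (−1)^{deg a_i} a_i · a_i^∨ = χ(A) · vol_A. -/

import Mathlib

/-- Let `A` be a connected Poincaré duality algebra of dimension `n` over a field `𝕜`,
with homogeneous basis `{a_i}`, dual basis `{a_i^∨}`, volume element `vol ∈ A^n`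
with `ε vol = 1`, and Euler characteristic `χ(A) = Σ_p (-1)^p dim A^p`.
Then `μ_A (Δ_A) = Σ_i (-1)^{deg a_i} a_i · a_i^∨ = χ(A) · vol`. -/
theorem mul_diagonal_element_eq_euler_smul_vol
    {𝕜 : Type*} [Field 𝕜] {A : Type*} [Ring A] [Algebra 𝕜 A]
    [FiniteDimensional 𝕜 A]
    (𝒜 : ℕ → Submodule 𝕜 A) [GradedAlgebra 𝒜] (n : ℕ)
    -- connectedness: `A^0 = 𝕜 · 1`
    (hconn : 𝒜 0 = Submodule.span 𝕜 {(1 : A)})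
    (ε : A →ₗ[𝕜] 𝕜)
    -- ε is supported in degree n
    (hsupp : ∀ p, p ≠ n → ∀ x ∈ 𝒜 p, ε x = 0)
    -- the pairing `A^p × A^{n-p} → 𝕜` is nondegenerate on the left and on the right
    (hndl : ∀ p, ∀ x ∈ 𝒜 p, x ≠ 0 → ∃ q, p + q = n ∧ ∃ y ∈ 𝒜 q, ε (x * y) ≠ 0)
    (hndr : ∀ q, ∀ y ∈ 𝒜 q, y ≠ 0 → ∃ p, p + q = n ∧ ∃ x ∈ 𝒜 p, ε (x * y) ≠ 0)
    -- a homogeneous basis `a` with degrees `da` and dual basis `a'`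
    {ι : Type*} [Fintype ι] [DecidableEq ι] (a : Module.Basis ι 𝕜 A) (da : ι → ℕ)
    (ha : ∀ i, a i ∈ 𝒜 (da i))
    (a' : ι → A) (hdual_a : ∀ i j, ε (a i * a' j) = if i = j then 1 else 0)
    -- the volume element
    (vol : A) (hvol : vol ∈ 𝒜 n) (hεvol : ε vol = 1) :
    ∑ i, ((-1 : 𝕜) ^ da i) • (a i * a' i)
      = (∑ᶠ p : ℕ, ((-1 : ℤ) ^ p * (Module.finrank 𝕜 (𝒜 p) : ℤ))) • vol := by
  classical
  -- degrees are bounded by `n`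
  have hdle : ∀ i, da i ≤ n := by
    intro i
    obtain ⟨q, hq, -⟩ := hndl (da i) (a i) (ha i) (a.ne_zero i)
    omega
  -- every element of `𝒜 n` is `ε x • vol`
  have keyA : ∀ x ∈ 𝒜 n, x = ε x • vol := by
    intro x hx
    by_contra h
    have hz : x - ε x • vol ∈ 𝒜 n := sub_mem hx (Submodule.smul_mem _ _ hvol)
    have hεz : ε (x - ε x • vol) = 0 := by
      simp [map_sub, map_smul, hεvol, smul_eq_mul]
    obtain ⟨q, hq, y, hy, hne⟩ := hndl n _ hz (sub_ne_zero.mpr h)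
    have hq0 : q = 0 := by omega
    subst hq0
    rw [hconn, Submodule.mem_span_singleton] at hy
    obtain ⟨c, rfl⟩ := hy
    apply hne
    rw [mul_smul_comm, mul_one, map_smul, hεz, smul_zero]
  -- `ε (x * z)` only sees the degree-`q` component of `z` when `x ∈ 𝒜 p`, `p + q = n`
  have key2 : ∀ p q, p + q = n → ∀ x ∈ 𝒜 p, ∀ z : A,
      ε (x * z) = ε (x * (DirectSum.decompose 𝒜 z q : A)) := by
    intro p q hpq x hxp z
    have hterm : ∀ r, r ≠ q → ε (x * (DirectSum.decompose 𝒜 z r : A)) = 0 := by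
      intro r hr
      exact hsupp (p + r) (by omega) _ (SetLike.mul_mem_graded hxp (SetLike.coe_mem _))
    conv_lhs => rw [← DirectSum.sum_support_decompose 𝒜 z]
    rw [Finset.mul_sum, map_sum]
    by_cases hq : q ∈ DFinsupp.support (DirectSum.decompose 𝒜 z)
    · exact Finset.sum_eq_single_of_mem q hq fun r _ hr => hterm r hr
    · rw [Finset.sum_eq_zero fun r hr => hterm r (fun h => hq (h ▸ hr)),
        DFinsupp.notMem_support_iff.mp hq]
      simp
  -- the pairing against the basis detects elements
  have inj : ∀ y : A, (∀ j, ε (a j * y) = 0) → y = 0 := by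
    intro y hy
    have hall : ∀ x, ε (x * y) = 0 := by
      intro x
      calc ε (x * y) = ε ((∑ i, a.repr x i • a i) * y) := by rw [a.sum_repr x]
        _ = 0 := by simp only [Finset.sum_mul, smul_mul_assoc, map_sum, map_smul, hy, smul_zero, Finset.sum_const_zero]
    by_contra hy0
    have hex : ∃ q, (DirectSum.decompose 𝒜 y q : A) ≠ 0 := by
      by_contra h
      push_neg at h
      apply hy0
      rw [← DirectSum.sum_support_decompose 𝒜 y]
      exact Finset.sum_eq_zero fun r _ => h r
    obtain ⟨q, hq⟩ := hex
    obtain ⟨p, hpq, x, hx, hne⟩ := hndr q _ (SetLike.coe_mem _) hq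
    exact hne (by rw [← key2 p q hpq x hx y]; exact hall x)
  -- the dual basis elements are homogeneous
  have ha' : ∀ i, a' i ∈ 𝒜 (n - da i) := by
    intro i
    have hzero : a' i - (DirectSum.decompose 𝒜 (a' i) (n - da i) : A) = 0 := by
      apply inj
      intro j
      rw [mul_sub, map_sub]
      have h1 : ε (a j * a' i) = ε (a j * (DirectSum.decompose 𝒜 (a' i) (n - da j) : A)) :=
        key2 (da j) (n - da j) (by have := hdle j; omega) (a j) (ha j) (a' i)
      by_cases hdij : da j = da i
      · rw [hdij] at h1
        rw [h1, sub_self]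
      · have h2 : ε (a j * a' i) = 0 := by
          rw [hdual_a, if_neg (fun h => hdij (by rw [h]))]
        have h3 : ε (a j * (DirectSum.decompose 𝒜 (a' i) (n - da i) : A)) = 0 :=
          hsupp (da j + (n - da i)) (by have := hdle i; have := hdle j; omega) _
            (SetLike.mul_mem_graded (ha j) (SetLike.coe_mem _))
        rw [h2, h3, sub_zero]
    rw [sub_eq_zero.mp hzero]
    exact SetLike.coe_mem _
  -- each diagonal product equals `vol`
  have hprod : ∀ i, a i * a' i = vol := by
    intro i
    have hmem : a i * a' i ∈ 𝒜 n := by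
      have := SetLike.mul_mem_graded (ha i) (ha' i)
      rwa [show da i + (n - da i) = n from by have := hdle i; omega] at this
    have h := keyA _ hmem
    rw [hdual_a] at h
    simpa using h
  -- the graded pieces have dimension the number of basis elements of that degree
  have hfr : ∀ p, Module.finrank 𝕜 (𝒜 p) = (Finset.univ.filter fun i => da i = p).card := by
    intro p
    set s := Finset.univ.filter fun i => da i = p with hs
    have hmem : ∀ i : s, a i ∈ 𝒜 p :=
      fun i => (Finset.mem_filter.mp i.2).2 ▸ ha i
    let v : s → 𝒜 p := fun i => ⟨a i, hmem i⟩
    have hli : LinearIndependent 𝕜 v := by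
      have h0 : LinearIndependent 𝕜 fun i : s => a i :=
        a.linearIndependent.comp _ Subtype.val_injective
      exact LinearIndependent.of_comp (𝒜 p).subtype h0
    -- projection onto `𝒜 p`
    let π : A →ₗ[𝕜] A := (𝒜 p).subtype ∘ₗ
      ((DFinsupp.lapply p : (DirectSum ℕ fun q => 𝒜 q) →ₗ[𝕜] 𝒜 p) ∘ₗ
        (DirectSum.decomposeLinearEquiv 𝒜).toLinearMap)
    have hπ : ∀ z : A, π z = (DirectSum.decompose 𝒜 z p : A) := fun z => rfl
    have hπa : ∀ i, π (a i) = if da i = p then a i else 0 := by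
      intro i
      rw [hπ]
      by_cases h : da i = p
      · rw [if_pos h]
        exact DirectSum.decompose_of_mem_same 𝒜 (h ▸ ha i)
      · rw [if_neg h]
        exact DirectSum.decompose_of_mem_ne 𝒜 (ha i) h
    have hspan : ⊤ ≤ Submodule.span 𝕜 (Set.range v) := by
      rintro ⟨x, hx⟩ -
      have hx' : x = ∑ i ∈ s, a.repr x i • a i := by
        have h1 : π x = x := by
          rw [hπ]; exact DirectSum.decompose_of_mem_same 𝒜 hx
        conv_lhs => rw [← h1, ← a.sum_repr x]
        rw [map_sum]
        simp only [map_smul]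
        rw [← Finset.sum_subset (Finset.subset_univ s)
          (fun i _ hi => by
            rw [hπa, if_neg (by simpa [hs] using hi), smul_zero])]
        exact (Finset.sum_congr rfl fun i hi =>
          by rw [hπa, if_pos (Finset.mem_filter.mp hi).2]).symm
      have hrepr : (⟨x, hx⟩ : 𝒜 p) = ∑ i ∈ s.attach, a.repr x i • v i := by
        have hcoe : ((∑ i ∈ s.attach, a.repr x i • v i : 𝒜 p) : A)
            = ∑ i ∈ s.attach, a.repr x i • a i := by
          push_cast
          rfl
        apply Subtype.ext
        rw [hcoe, Finset.sum_attach s fun i => a.repr x i • a i]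
        exact hx'
      rw [hrepr]
      exact Submodule.sum_smul_mem _ _ fun i _ => Submodule.subset_span ⟨i, rfl⟩
    let b : Module.Basis s 𝕜 (𝒜 p) := Module.Basis.mk hli hspan
    rw [Module.finrank_eq_card_basis b, Fintype.card_coe]
  -- graded pieces above degree `n` vanish
  have htriv : ∀ p, n < p → 𝒜 p = ⊥ := by
    intro p hp
    rw [Submodule.eq_bot_iff]
    intro x hx
    by_contra hx0
    obtain ⟨q, hq, -⟩ := hndl p x hx hx0
    omega
  -- compute the Euler characteristic as a finite sum
  have hsupport : (Function.support fun p : ℕ =>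
      ((-1 : ℤ) ^ p * (Module.finrank 𝕜 (𝒜 p) : ℤ))) ⊆ ↑(Finset.range (n + 1)) := by
    intro p hp
    simp only [Function.mem_support] at hp
    simp only [Finset.coe_range, Set.mem_Iio]
    by_contra h
    apply hp
    rw [htriv p (by omega)]
    simp
  rw [finsum_eq_sum_of_support_subset _ hsupport]
  have hcount : ∑ p ∈ Finset.range (n + 1), (-1 : ℤ) ^ p * (Module.finrank 𝕜 (𝒜 p) : ℤ)
      = ∑ i, (-1 : ℤ) ^ da i := by
    rw [← Finset.sum_fiberwise_of_maps_to (g := da) (t := Finset.range (n + 1))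
      (fun i _ => Finset.mem_range.mpr (Nat.lt_succ_of_le (hdle i)))
      (fun i => (-1 : ℤ) ^ da i)]
    refine Finset.sum_congr rfl fun p _ => ?_
    rw [hfr p,
      Finset.sum_congr rfl (fun i hi => by rw [(Finset.mem_filter.mp hi).2]),
      Finset.sum_const, nsmul_eq_mul, mul_comm]
  rw [hcount]
  calc ∑ i, ((-1 : 𝕜) ^ da i) • (a i * a' i)
      = ∑ i, ((-1 : 𝕜) ^ da i) • vol :=
        Finset.sum_congr rfl fun i _ => by rw [hprod i]
    _ = (∑ i, (-1 : 𝕜) ^ da i) • vol := by rw [Finset.sum_smul]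
    _ = (((∑ i, (-1 : ℤ) ^ da i : ℤ) : 𝕜)) • vol := by push_cast; ring_nf
    _ = (∑ i, (-1 : ℤ) ^ da i) • vol := Int.cast_smul_eq_zsmul 𝕜 _ vol
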